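/- arXiv:1203.4726 — 3 statements merged into one kernel-verified Lean document; each statement's English description precedes it below -/
import Mathlib

section
/- Let f : ℝ → ℝ be upper semicontinuous and let X be a stochastic process with right-continuous sample paths. Then for every ω the map t ↦ sup_{0 ≤ s ≤ t} f(X_s(ω)) is right-continuous (and in particular measurable in t). -/
open MeasureTheory Set

/-- If `f` is upper semicontinuous and the process `X` has right-continuous
sample paths, then for every `ω` the running supremum
`t ↦ ⨆ s, 0 ≤ s ≤ t, f (X s ω)` is right-continuous in `t`. -/
theorem running_sup_right_continuous {Ω : Type*} (X : ℝ → Ω → ℝ) (f : ℝ → ℝ)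
    (hf : UpperSemicontinuous f)
    (hX : ∀ ω t, ContinuousWithinAt (fun s => X s ω) (Set.Ici t) t) :
    ∀ (ω : Ω) (t : ℝ),
      ContinuousWithinAt (fun t' : ℝ => ⨆ s : Set.Icc (0 : ℝ) t', f (X (s : ℝ) ω))
        (Set.Ici t) t := by
  intro ω t
  set g : ℝ → ℝ := fun s => X s ω with hgX
  have hM : ∀ r : ℝ, (⨆ s : Set.Icc (0 : ℝ) r, f (X (s : ℝ) ω))
      = sSup ((f ∘ g) '' Set.Icc 0 r) := by
    intro r
    exact (congrArg sSup (Set.image_eq_range (f ∘ g) (Set.Icc 0 r))).symm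
  set G : ℝ → ℝ := f ∘ g with hG
  -- right upper semicontinuity of G
  have hgusc : ∀ c, G t < c → ∀ᶠ u in nhdsWithin t (Set.Ici t), G u < c := by
    intro c hc
    exact (hX ω t).eventually (hf (X t ω) c hc)
  have goal : Filter.Tendsto (fun t' : ℝ => sSup (G '' Set.Icc 0 t'))
      (nhdsWithin t (Set.Ici t)) (nhds (sSup (G '' Set.Icc 0 t))) := by
    rcases lt_or_ge t 0 with ht | ht
    · -- t < 0 : eventually the interval is empty, everything is 0
      have hev : (fun t' : ℝ => sSup (G '' Set.Icc 0 t'))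
          =ᶠ[nhdsWithin t (Set.Ici t)] fun _ => (0 : ℝ) := by
        filter_upwards [(eventually_lt_nhds ht).filter_mono nhdsWithin_le_nhds] with t' ht'
        rw [Set.Icc_eq_empty (by linarith), Set.image_empty, Real.sSup_empty]
      have h0 : sSup (G '' Set.Icc 0 t) = 0 := by
        rw [Set.Icc_eq_empty (by linarith), Set.image_empty, Real.sSup_empty]
      rw [h0]
      exact Filter.Tendsto.congr' hev.symm tendsto_const_nhds
    · by_cases hb : BddAbove (G '' Set.Icc 0 t)
      · -- main case
        have hne : (G '' Set.Icc 0 t).Nonempty :=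
          ⟨G t, Set.mem_image_of_mem G ⟨ht, le_refl t⟩⟩
        have hgt : G t ≤ sSup (G '' Set.Icc 0 t) :=
          le_csSup hb (Set.mem_image_of_mem G ⟨ht, le_refl t⟩)
        set M : ℝ := sSup (G '' Set.Icc 0 t) with hMdef
        have hkey : ∀ ε : ℝ, 0 < ε → ∀ᶠ t' in nhdsWithin t (Set.Ici t),
            M ≤ sSup (G '' Set.Icc 0 t') ∧ sSup (G '' Set.Icc 0 t') ≤ M + ε := by
          intro ε hε
          have h1 : ∀ᶠ u in nhdsWithin t (Set.Ici t), G u < M + ε :=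
            hgusc (M + ε) (by linarith)
          obtain ⟨u, hu, hsub⟩ := mem_nhdsGE_iff_exists_Ico_subset.1 h1
          have hmem : Set.Ico t u ∈ nhdsWithin t (Set.Ici t) :=
            mem_nhdsGE_iff_exists_Ico_subset.2 ⟨u, hu, subset_rfl⟩
          filter_upwards [hmem] with t' ht'
          have hbound : ∀ y ∈ G '' Set.Icc 0 t', y ≤ M + ε := by
            rintro y ⟨s, ⟨hs0, hst'⟩, rfl⟩
            rcases le_or_gt s t with hst | hst
            · have : G s ≤ M := le_csSup hb (Set.mem_image_of_mem G ⟨hs0, hst⟩)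
              linarith
            · have hmem' : s ∈ Set.Ico t u := ⟨le_of_lt hst, lt_of_le_of_lt hst' ht'.2⟩
              exact le_of_lt (hsub hmem')
          have hb' : BddAbove (G '' Set.Icc 0 t') := ⟨M + ε, hbound⟩
          have hne' : (G '' Set.Icc 0 t').Nonempty :=
            ⟨G 0, Set.mem_image_of_mem G ⟨le_refl 0, le_trans ht ht'.1⟩⟩
          constructor
          · exact csSup_le_csSup hb' hne
              (Set.image_mono (f := G) (Set.Icc_subset_Icc_right ht'.1))
          · exact csSup_le hne' hbound
        rw [tendsto_order]
        constructor
        · intro a ha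
          filter_upwards [hkey 1 one_pos] with t' ht'
          exact lt_of_lt_of_le ha ht'.1
        · intro b hb'
          filter_upwards [hkey ((b - M) / 2) (by linarith)] with t' ht'
          have := ht'.2
          linarith
      · -- unbounded case : everything is the junk value 0
        have hev : (fun t' : ℝ => sSup (G '' Set.Icc 0 t'))
            =ᶠ[nhdsWithin t (Set.Ici t)] fun _ => sSup (G '' Set.Icc 0 t) := by
          filter_upwards [self_mem_nhdsWithin] with t' ht'
          have hb' : ¬ BddAbove (G '' Set.Icc 0 t') := fun h =>
            hb (h.mono (Set.image_mono (f := G) (Set.Icc_subset_Icc_right ht')))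
          rw [Real.sSup_of_not_bddAbove hb', Real.sSup_of_not_bddAbove hb]
        exact Filter.Tendsto.congr' hev.symm tendsto_const_nhds
  unfold ContinuousWithinAt
  simp only [hM]
  exact goal
end

section
/- Let ψ_β be a continuous, strictly positive, nondecreasing function on ℝ, m a positive density, and f̃ : ℝ → ℝ a function such that there exists x̃ with f̃(x) ≤ 0 for x ≤ x̃ and f̃ nondecreasing on [x̃, ∞). Define Q(z) = (∫_{-∞}^{z} f̃(y) ψ_β(y) m(y) dy) / (β ∫_{-∞}^{z} ψ_β(y) m(y) dy), assuming all integrals are finite. Then either Q ≤ 0 everywhere, or there exists x* such that Q(x) ≤ 0 for x ≤ x*, and Q is positive and nondecreasing on (x*, ∞). -/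
open MeasureTheory Set

/-- Let `ψ` be continuous, strictly positive and nondecreasing, `m` a positive
continuous density and `f̃` a function which is `≤ 0` on `(-∞, x̃]` and
nondecreasing on `[x̃, ∞)`.  Define
`Q(z) = (∫_{-∞}^z f̃ ψ m) / (β ∫_{-∞}^z ψ m)`.  Then either `Q ≤ 0` everywhere,
or there is a point `x✶` such that `Q ≤ 0` on `(-∞, x✶]` and `Q` is positive
and nondecreasing on `(x✶, ∞)`. -/
theorem Q_one_sided_shape (β : ℝ) (hβ : 0 < β)
    (ψ m ftilde : ℝ → ℝ)
    (hψc : Continuous ψ) (hψpos : ∀ y, 0 < ψ y) (hψmono : Monotone ψ)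
    (hmc : Continuous m) (hmpos : ∀ y, 0 < m y)
    (xtilde : ℝ)
    (hf_neg : ∀ y ≤ xtilde, ftilde y ≤ 0)
    (hf_mono : MonotoneOn ftilde (Set.Ici xtilde))
    (hfint : ∀ z : ℝ, IntegrableOn (fun y => ftilde y * (ψ y * m y)) (Set.Iic z))
    (hψint : ∀ z : ℝ, IntegrableOn (fun y => ψ y * m y) (Set.Iic z))
    (Q : ℝ → ℝ)
    (hQ : ∀ z, Q z = (∫ y in Set.Iic z, ftilde y * (ψ y * m y))
      / (β * ∫ y in Set.Iic z, ψ y * m y)) :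
    (∀ z, Q z ≤ 0) ∨
      ∃ xstar : ℝ, (∀ x ≤ xstar, Q x ≤ 0) ∧ (∀ x, xstar < x → 0 < Q x) ∧
        MonotoneOn Q (Set.Ioi xstar) := by
  set g : ℝ → ℝ := fun y => ftilde y * (ψ y * m y) with hg
  set h : ℝ → ℝ := fun y => ψ y * m y with hh
  set F : ℝ → ℝ := fun z => ∫ y in Iic z, g y with hFdef
  set G : ℝ → ℝ := fun z => ∫ y in Iic z, h y with hGdef
  have hhpos : ∀ y, 0 < h y := fun y => mul_pos (hψpos y) (hmpos y)
  have hGpos : ∀ z, 0 < G z := by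
    intro z
    rw [hGdef]
    rw [setIntegral_pos_iff_support_of_nonneg_ae
      (Filter.Eventually.of_forall fun y => (hhpos y).le) (hψint z)]
    have hsupp : Function.support h = Set.univ := by
      ext y; simp [(hhpos y).ne']
    rw [hsupp, Set.univ_inter, Real.volume_Iic]
    exact ENNReal.zero_lt_top
  -- splitting
  have hFsplit : ∀ z1 z2 : ℝ, z1 ≤ z2 → F z2 = F z1 + ∫ y in Ioc z1 z2, g y := by
    intro z1 z2 hz
    show (∫ y in Iic z2, g y) = (∫ y in Iic z1, g y) + ∫ y in Ioc z1 z2, g y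
    rw [← Set.Iic_union_Ioc_eq_Iic hz,
      setIntegral_union (Set.Iic_disjoint_Ioc le_rfl) measurableSet_Ioc
        (hfint z1) ((hfint z2).mono_set Set.Ioc_subset_Iic_self)]
  have hGsplit : ∀ z1 z2 : ℝ, z1 ≤ z2 → G z2 = G z1 + ∫ y in Ioc z1 z2, h y := by
    intro z1 z2 hz
    show (∫ y in Iic z2, h y) = (∫ y in Iic z1, h y) + ∫ y in Ioc z1 z2, h y
    rw [← Set.Iic_union_Ioc_eq_Iic hz,
      setIntegral_union (Set.Iic_disjoint_Ioc le_rfl) measurableSet_Ioc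
        (hψint z1) ((hψint z2).mono_set Set.Ioc_subset_Iic_self)]
  -- F z > 0 implies ftilde z > 0 and xtilde < z
  have hfz : ∀ z, 0 < F z → 0 < ftilde z ∧ xtilde < z := by
    intro z hFz
    have hfpos : 0 < ftilde z := by
      by_contra hle
      push_neg at hle
      have : F z ≤ 0 := by
        apply setIntegral_nonpos measurableSet_Iic
        intro y hy
        have hfy : ftilde y ≤ 0 := by
          rcases le_or_gt y xtilde with h1 | h1
          · exact hf_neg y h1
          · exact le_trans (hf_mono h1.le (le_trans h1.le hy) hy) hle
        exact mul_nonpos_of_nonpos_of_nonneg hfy (hhpos y).le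
      linarith
    refine ⟨hfpos, ?_⟩
    by_contra hle
    push_neg at hle
    exact absurd (hf_neg z hle) (not_le.mpr hfpos)
  -- upper set property and monotonicity of F on the positive set
  have hupper : ∀ z1 z2 : ℝ, z1 ≤ z2 → 0 < F z1 → F z1 ≤ F z2 := by
    intro z1 z2 hz hF1
    obtain ⟨hf1, hx1⟩ := hfz z1 hF1
    rw [hFsplit z1 z2 hz]
    have : 0 ≤ ∫ y in Ioc z1 z2, g y := by
      apply setIntegral_nonneg measurableSet_Ioc
      intro y hy
      have : 0 < ftilde y :=
        lt_of_lt_of_le hf1 (hf_mono hx1.le (le_trans hx1.le hy.1.le) hy.1.le)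
      exact mul_nonneg this.le (hhpos y).le
    linarith
  -- F z ≤ ftilde z * G z when F z > 0
  have hFle : ∀ z, 0 < F z → F z ≤ ftilde z * G z := by
    intro z hFz
    obtain ⟨hf1, hx1⟩ := hfz z hFz
    have : F z ≤ ∫ y in Iic z, ftilde z * h y := by
      apply setIntegral_mono_on (hfint z) ((hψint z).const_mul _) measurableSet_Iic
      intro y hy
      have hfy : ftilde y ≤ ftilde z := by
        rcases le_or_gt y xtilde with h1 | h1
        · exact le_trans (hf_neg y h1) hf1.le
        · exact hf_mono h1.le hx1.le hy
      exact mul_le_mul_of_nonneg_right hfy (hhpos y).le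
    rwa [integral_const_mul] at this
  by_cases hall : ∀ z, Q z ≤ 0
  · exact Or.inl hall
  push_neg at hall
  obtain ⟨z0, hz0⟩ := hall
  have hQF : ∀ z, Q z = F z / (β * G z) := fun z => hQ z
  have hFQ : ∀ z, 0 < F z ↔ 0 < Q z := by
    intro z
    rw [hQF z]
    constructor
    · intro hFz; exact div_pos hFz (mul_pos hβ (hGpos z))
    · intro hQz
      by_contra hle
      push_neg at hle
      have : F z / (β * G z) ≤ 0 :=
        div_nonpos_of_nonpos_of_nonneg hle (mul_pos hβ (hGpos z)).le
      linarith
  set S : Set ℝ := {z | 0 < F z} with hS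
  have hSne : S.Nonempty := ⟨z0, (hFQ z0).mpr hz0⟩
  have hSbdd : BddBelow S := ⟨xtilde, fun z hz => (hfz z hz).2.le⟩
  set xstar : ℝ := sInf S with hxs
  -- continuity of F near xstar, to show F xstar ≤ 0
  have hFxstar : F xstar ≤ 0 := by
    have hcont : ContinuousOn F (Icc (xstar - 1) (xstar + 1)) := by
      have hprim : ContinuousOn (fun x => ∫ t in Ioc (xstar - 1) x, g t)
          (Icc (xstar - 1) (xstar + 1)) := by
        exact intervalIntegral.continuousOn_primitive
          ((hfint (xstar + 1)).mono_set Icc_subset_Iic_self)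
      have heq : ∀ x ∈ Icc (xstar - 1) (xstar + 1),
          F x = F (xstar - 1) + ∫ t in Ioc (xstar - 1) x, g t := fun x hx =>
        hFsplit (xstar - 1) x hx.1
      refine ContinuousOn.congr ?_ heq
      exact continuousOn_const.add hprim
    have hmem : xstar ∈ Icc (xstar - 1) (xstar + 1) := by
      constructor <;> linarith
    have hca : ContinuousAt F xstar :=
      hcont.continuousAt (Icc_mem_nhds (by linarith) (by linarith))
    have hseq : Filter.Tendsto (fun n : ℕ => F (xstar - 1 / (n + 1)))
        Filter.atTop (nhds (F xstar)) := by
      apply hca.tendsto.comp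
      have : Filter.Tendsto (fun n : ℕ => xstar - 1 / (n + 1))
          Filter.atTop (nhds (xstar - 0)) :=
        Filter.Tendsto.const_sub _ tendsto_one_div_add_atTop_nhds_zero_nat
      simpa using this
    apply le_of_tendsto hseq
    apply Filter.Eventually.of_forall
    intro n
    by_contra hlt
    push_neg at hlt
    have hmemS : (xstar - 1 / (n + 1)) ∈ S := hlt
    have : xstar ≤ xstar - 1 / (n + 1) := csInf_le hSbdd hmemS
    have hpos : (0:ℝ) < 1 / (n + 1) := by positivity
    linarith
  have hFneg : ∀ x ≤ xstar, F x ≤ 0 := by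
    intro x hx
    by_contra hlt
    push_neg at hlt
    have : xstar ≤ x := csInf_le hSbdd hlt
    have hxx : x = xstar := le_antisymm hx this
    rw [hxx] at hlt
    linarith
  have hFpos : ∀ x, xstar < x → 0 < F x := by
    intro x hx
    obtain ⟨s, hsS, hsx⟩ := exists_lt_of_csInf_lt hSne hx
    exact lt_of_lt_of_le hsS (hupper s x hsx.le hsS)
  refine Or.inr ⟨xstar, ?_, ?_, ?_⟩
  · intro x hx
    rw [hQF x]
    exact div_nonpos_of_nonpos_of_nonneg (hFneg x hx) (mul_pos hβ (hGpos x)).le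
  · intro x hx
    exact (hFQ x).mp (hFpos x hx)
  · intro z1 hz1 z2 hz2 hz
    simp only [Set.mem_Ioi] at hz1 hz2
    have hF1 : 0 < F z1 := hFpos z1 hz1
    obtain ⟨hf1, hx1⟩ := hfz z1 hF1
    have hG1 := hGpos z1
    have hG2 := hGpos z2
    rw [hQF z1, hQF z2, div_le_div_iff₀ (mul_pos hβ hG1) (mul_pos hβ hG2)]
    have hB : 0 ≤ ∫ y in Ioc z1 z2, h y :=
      setIntegral_nonneg measurableSet_Ioc fun y _ => (hhpos y).le
    have hA : ftilde z1 * (∫ y in Ioc z1 z2, h y) ≤ ∫ y in Ioc z1 z2, g y := by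
      have : (∫ y in Ioc z1 z2, ftilde z1 * h y) ≤ ∫ y in Ioc z1 z2, g y := by
        apply setIntegral_mono_on
          (((hψint z2).mono_set Set.Ioc_subset_Iic_self).const_mul _)
          ((hfint z2).mono_set Set.Ioc_subset_Iic_self) measurableSet_Ioc
        intro y hy
        have hfy : ftilde z1 ≤ ftilde y :=
          hf_mono hx1.le (le_trans hx1.le hy.1.le) hy.1.le
        exact mul_le_mul_of_nonneg_right hfy (hhpos y).le
      rwa [integral_const_mul] at this
    have hkey : F z1 * (∫ y in Ioc z1 z2, h y) ≤ (∫ y in Ioc z1 z2, g y) * G z1 := by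
      calc F z1 * (∫ y in Ioc z1 z2, h y)
          ≤ (ftilde z1 * G z1) * (∫ y in Ioc z1 z2, h y) :=
            mul_le_mul_of_nonneg_right (hFle z1 hF1) hB
        _ = (ftilde z1 * (∫ y in Ioc z1 z2, h y)) * G z1 := by ring
        _ ≤ (∫ y in Ioc z1 z2, g y) * G z1 :=
            mul_le_mul_of_nonneg_right hA hG1.le
    rw [hFsplit z1 z2 hz, hGsplit z1 z2 hz]
    nlinarith [hFsplit z1 z2 hz]
end

section
/- For β > 0 and integer n ≥ 2, the equation z cosh(z√(2β)) = (n/√(2β)) sinh(z√(2β)) has a unique solution z > 0; for n = 1 the equation z cosh(z√(2β)) = (1/√(2β)) sinh(z√(2β)) has no solution z > 0. -/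
open Real

private lemma hasDerivAt_aux (n : ℕ) (x : ℝ) :
    HasDerivAt (fun x : ℝ => x - n * (Real.sinh x / Real.cosh x))
      (1 - n * (1 / Real.cosh x ^ 2)) x := by
  have hc : Real.cosh x ≠ 0 := (Real.cosh_pos x).ne'
  have h1 : HasDerivAt (fun x : ℝ => Real.sinh x / Real.cosh x)
      ((Real.cosh x * Real.cosh x - Real.sinh x * Real.sinh x) / Real.cosh x ^ 2) x :=
    (Real.hasDerivAt_sinh x).div (Real.hasDerivAt_cosh x) hc
  have h2 : (Real.cosh x * Real.cosh x - Real.sinh x * Real.sinh x) / Real.cosh x ^ 2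
      = 1 / Real.cosh x ^ 2 := by
    rw [show Real.cosh x * Real.cosh x - Real.sinh x * Real.sinh x
        = Real.cosh x ^ 2 - Real.sinh x ^ 2 by ring, Real.cosh_sq_sub_sinh_sq x]
  rw [h2] at h1
  exact (hasDerivAt_id' x).sub (h1.const_mul (n : ℝ))

private lemma sinh_lt_mul_cosh {x : ℝ} (hx : 0 < x) : Real.sinh x < x * Real.cosh x := by
  have key : StrictMonoOn (fun x : ℝ => x * Real.cosh x - Real.sinh x) (Set.Ici 0) := by
    apply strictMonoOn_of_deriv_pos (convex_Ici 0)
    · exact ((continuous_id.mul Real.continuous_cosh).sub Real.continuous_sinh).continuousOn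
    · intro y hy
      rw [interior_Ici] at hy
      have h : HasDerivAt (fun x : ℝ => x * Real.cosh x - Real.sinh x) (y * Real.sinh y) y := by
        have := ((hasDerivAt_id' y).mul (Real.hasDerivAt_cosh y)).sub (Real.hasDerivAt_sinh y)
        exact this.congr_deriv (by ring)
      rw [h.deriv]
      exact mul_pos hy (Real.sinh_pos_iff.2 hy)
  have h0 := key Set.self_mem_Ici (Set.mem_Ici.2 hx.le) hx
  simp only [Real.cosh_zero, Real.sinh_zero, mul_one, zero_mul, sub_zero] at h0
  linarith

private lemma exists_unique_root (n : ℕ) (hn : 2 ≤ n) :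
    ∃! x : ℝ, 0 < x ∧ x * Real.cosh x = n * Real.sinh x := by
  set f : ℝ → ℝ := fun x => x - n * (Real.sinh x / Real.cosh x) with hf
  have hcne : ∀ x : ℝ, Real.cosh x ≠ 0 := fun x => (Real.cosh_pos x).ne'
  have hcont : Continuous f :=
    continuous_id.sub (continuous_const.mul
      (Real.continuous_sinh.div Real.continuous_cosh hcne))
  have hequiv : ∀ x : ℝ, (x * Real.cosh x = n * Real.sinh x) ↔ f x = 0 := by
    intro x
    have hc := hcne x
    simp only [hf, sub_eq_zero]
    constructor
    · intro h; field_simp; linarith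
    · intro h; field_simp at h; linarith
  -- convexity
  have hconv : StrictConvexOn ℝ (Set.Ici 0) f := by
    apply StrictMonoOn.strictConvexOn_of_deriv (convex_Ici 0) hcont.continuousOn
    rw [interior_Ici]
    have hder : ∀ x : ℝ, deriv f x = 1 - n * (1 / Real.cosh x ^ 2) := fun x =>
      (hasDerivAt_aux n x).deriv
    intro a ha b hb hab
    rw [hder, hder]
    have h1 : Real.cosh a < Real.cosh b :=
      Real.cosh_strictMonoOn (Set.mem_Ici.2 (le_of_lt ha)) (Set.mem_Ici.2 (le_of_lt hb)) hab
    have h2 : (0:ℝ) < Real.cosh a := Real.cosh_pos a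
    have h3 : (0:ℝ) < Real.cosh b := Real.cosh_pos b
    have hn0 : (0:ℝ) < n := by positivity
    have : 1 / Real.cosh b ^ 2 < 1 / Real.cosh a ^ 2 := by
      apply one_div_lt_one_div_of_lt (by positivity)
      nlinarith
    nlinarith
  have hf0 : f 0 = 0 := by simp [hf]
  -- f (1/2) < 0
  have hhalf : f (1/2 : ℝ) < 0 := by
    have hs : (1/2 : ℝ) < Real.sinh (1/2) := Real.self_lt_sinh_iff.2 (by norm_num)
    have hc2 : Real.cosh (1/2 : ℝ) < 2 := by
      rw [Real.cosh_eq]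
      have he1 : Real.exp (1/2 : ℝ) < 2 := by
        have h4 : Real.exp (1/2 : ℝ) * Real.exp (1/2 : ℝ) = Real.exp 1 := by
          rw [← Real.exp_add]; norm_num
        have := Real.exp_one_lt_d9
        nlinarith [Real.exp_pos (1/2 : ℝ)]
      have he2 : Real.exp (-(1/2) : ℝ) < 1 := by
        rw [Real.exp_lt_one_iff]; norm_num
      linarith
    have hc0 : (0:ℝ) < Real.cosh (1/2) := Real.cosh_pos _
    have hq : (1:ℝ)/4 < Real.sinh (1/2) / Real.cosh (1/2) := by
      rw [lt_div_iff₀ hc0]; nlinarith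
    have hn2 : (2:ℝ) ≤ (n:ℝ) := by exact_mod_cast hn
    simp only [hf]
    nlinarith
  -- f (n+1) > 0
  have hbig : 0 < f ((n:ℝ) + 1) := by
    have hsc : Real.sinh ((n:ℝ)+1) < Real.cosh ((n:ℝ)+1) := by
      nlinarith [Real.cosh_sub_sinh ((n:ℝ)+1), Real.exp_pos (-((n:ℝ)+1))]
    have hc0 : (0:ℝ) < Real.cosh ((n:ℝ)+1) := Real.cosh_pos _
    have : Real.sinh ((n:ℝ)+1) / Real.cosh ((n:ℝ)+1) < 1 := by
      rw [div_lt_one hc0]; exact hsc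
    have hn0 : (0:ℝ) < n := by positivity
    simp only [hf]
    nlinarith
  -- existence via IVT
  have hle : (1/2 : ℝ) ≤ (n:ℝ) + 1 := by
    have : (2:ℝ) ≤ (n:ℝ) := by exact_mod_cast hn
    linarith
  have hiv := intermediate_value_Icc hle hcont.continuousOn
  have h0mem : (0:ℝ) ∈ Set.Icc (f (1/2)) (f ((n:ℝ)+1)) := ⟨hhalf.le, hbig.le⟩
  obtain ⟨x, hxmem, hxf⟩ := hiv h0mem
  have hxpos : 0 < x := lt_of_lt_of_le (by norm_num) hxmem.1
  refine ⟨x, ⟨hxpos, (hequiv x).2 hxf⟩, ?_⟩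
  -- uniqueness
  have huniq : ∀ a b : ℝ, 0 < a → 0 < b → f a = 0 → f b = 0 → a < b → False := by
    intro a b ha hb hfa hfb hab
    have hbne : b ≠ 0 := hb.ne'
    have hw1 : 0 < 1 - a / b := by
      rw [sub_pos, div_lt_one hb]; exact hab
    have hw2 : 0 < a / b := div_pos ha hb
    have hsum : (1 - a / b) + a / b = 1 := by ring
    have hlt := hconv.2 (Set.self_mem_Ici) (Set.mem_Ici.2 hb.le)
      (by exact fun h => hbne h.symm) hw1 hw2 hsum
    simp only [hf0, hfb, smul_zero, mul_zero, add_zero, zero_add, smul_eq_mul,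
      div_mul_cancel₀ a hbne, hfa] at hlt
    exact lt_irrefl _ hlt
  intro y ⟨hy, hye⟩
  have hyf := (hequiv y).1 hye
  by_contra hne
  rcases lt_or_gt_of_ne hne with h | h
  · exact huniq y x hy hxpos hyf hxf h
  · exact huniq x y hxpos hy hxf hyf h

/-- For `β > 0` and an integer `n ≥ 2`, the equation
`z cosh(z√(2β)) = (n/√(2β)) sinh(z√(2β))` has a unique positive solution,
while for `n = 1` it has no positive solution. -/
theorem transcendental_eq_unique_root (β : ℝ) (hβ : 0 < β) :
    (∀ n : ℕ, 2 ≤ n →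
      ∃! z : ℝ, 0 < z ∧
        z * Real.cosh (z * Real.sqrt (2 * β))
          = ((n : ℝ) / Real.sqrt (2 * β)) * Real.sinh (z * Real.sqrt (2 * β))) ∧
    ¬ ∃ z : ℝ, 0 < z ∧
        z * Real.cosh (z * Real.sqrt (2 * β))
          = ((1 : ℝ) / Real.sqrt (2 * β)) * Real.sinh (z * Real.sqrt (2 * β)) := by
  have hs : 0 < Real.sqrt (2 * β) := Real.sqrt_pos.2 (by linarith)
  set s := Real.sqrt (2 * β) with hsdef
  constructor
  · intro n hn
    obtain ⟨x, ⟨hx, hxe⟩, hux⟩ := exists_unique_root n hn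
    refine ⟨x / s, ⟨div_pos hx hs, ?_⟩, ?_⟩
    · rw [div_mul_cancel₀ x hs.ne']
      field_simp
      linarith
    · rintro z ⟨hz, hze⟩
      have hz2 : z * s * Real.cosh (z * s) = n * Real.sinh (z * s) := by
        field_simp at hze
        nlinarith
      have := hux (z * s) ⟨mul_pos hz hs, hz2⟩
      rw [← this]
      field_simp
  · rintro ⟨z, hz, hze⟩
    have hzs : 0 < z * s := mul_pos hz hs
    have hlt := sinh_lt_mul_cosh hzs
    field_simp at hze
    nlinarith
end
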